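/- (Interpolant combination lemma, left-empty case) With notation as before, suppose neither l nor l* occurs in the antecedent side, i.e., m = o = 0. If I_1 and I_2 satisfy ⋀E_1 → I_1, I_1 → ⋁{C_1,...,C_p} ∨ ⋁E_2, ⋀E_1 → I_2, and I_2 → ⋁{D_1,...,D_r} ∨ ⋁E_2 (all valid), then I = I_1 ∧ I_2 satisfies: ⋀E_1 → I is valid and I → (C_1∧l*) ∨...∨ (C_p∧l*) ∨ (D_1∧l) ∨...∨ (D_r∧l) ∨ ⋁E_2 is valid. -/
import Mathlib


/-- Propositional formulas over variables indexed by naturals. -/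
inductive PropForm where
  | var : Nat → PropForm
  | fls : PropForm
  | tru : PropForm
  | neg : PropForm → PropForm
  | conj : PropForm → PropForm → PropForm
  | disj : PropForm → PropForm → PropForm
deriving DecidableEq

/-- Classical Boolean evaluation of a formula under a valuation. -/
def PropForm.eval (v : Nat → Bool) : PropForm → Bool
  | .var n => v n
  | .fls => false
  | .tru => true
  | .neg A => !(A.eval v)
  | .conj A B => A.eval v && B.eval v
  | .disj A B => A.eval v || B.eval v

/-- The propositional variables occurring in a formula. -/
def PropForm.vars : PropForm → Finset Nat
  | .var n => {n}
  | .fls => ∅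
  | .tru => ∅
  | .neg A => A.vars
  | .conj A B => A.vars ∪ B.vars
  | .disj A B => A.vars ∪ B.vars

/-- A formula is valid iff true under every valuation. -/
def PropForm.Valid (A : PropForm) : Prop := ∀ v : Nat → Bool, A.eval v = true

/-- Literals: a variable or its negation. -/
inductive Lit where
  | pos : Nat → Lit
  | neg : Nat → Lit
deriving DecidableEq

/-- The complement of a literal. -/
def Lit.compl : Lit → Lit
  | .pos n => .neg n
  | .neg n => .pos n

/-- The variable of a literal. -/
def Lit.var : Lit → Nat
  | .pos n => n
  | .neg n => n

/-- Evaluation of a literal. -/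
def Lit.eval (v : Nat → Bool) : Lit → Bool
  | .pos n => v n
  | .neg n => !(v n)

/-- A literal as a formula. -/
def Lit.toForm : Lit → PropForm
  | .pos n => .var n
  | .neg n => .neg (.var n)

/-- A clause (finite set of literals read disjunctively) is satisfied by `v`. -/
def clauseSat (v : Nat → Bool) (C : Finset Lit) : Prop := ∃ l ∈ C, l.eval v = true

/-- A conjunction of literals (finite set read conjunctively) is satisfied by `v`. -/
def cubeSat (v : Nat → Bool) (C : Finset Lit) : Prop := ∀ l ∈ C, l.eval v = true

theorem stmt5 (l : Lit) (Cs Ds : List (Finset Lit))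
    (E₁ E₂ : Finset (Finset Lit)) (I₁ I₂ : PropForm)
    (hCs : ∀ C ∈ Cs, l ∉ C ∧ l.compl ∉ C)
    (hDs : ∀ D ∈ Ds, l ∉ D ∧ l.compl ∉ D)
    (hE₁ : ∀ C ∈ E₁, l ∉ C ∧ l.compl ∉ C)
    (hE₂ : ∀ C ∈ E₂, l ∉ C ∧ l.compl ∉ C)
    (hI₁l : ∀ v : Nat → Bool, (∀ C ∈ E₁, clauseSat v C) → I₁.eval v = true)
    (hI₁r : ∀ v : Nat → Bool, I₁.eval v = true →
      (∃ C ∈ Cs, cubeSat v C) ∨ (∃ C ∈ E₂, cubeSat v C))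
    (hI₂l : ∀ v : Nat → Bool, (∀ C ∈ E₁, clauseSat v C) → I₂.eval v = true)
    (hI₂r : ∀ v : Nat → Bool, I₂.eval v = true →
      (∃ D ∈ Ds, cubeSat v D) ∨ (∃ C ∈ E₂, cubeSat v C)) :
    (∀ v : Nat → Bool, (∀ C ∈ E₁, clauseSat v C) →
      (PropForm.conj I₁ I₂).eval v = true) ∧
    (∀ v : Nat → Bool, (PropForm.conj I₁ I₂).eval v = true →
      (∃ C ∈ Cs, cubeSat v (insert l.compl C)) ∨
      (∃ D ∈ Ds, cubeSat v (insert l D)) ∨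
      (∃ C ∈ E₂, cubeSat v C)) := by
  constructor
  · intro v hv
    simp [PropForm.eval, hI₁l v hv, hI₂l v hv]
  · intro v hv
    simp [PropForm.eval, Bool.and_eq_true] at hv
    have hcompl : l.eval v = false → l.compl.eval v = true := by
      cases l <;> simp [Lit.eval, Lit.compl]
    by_cases hl : l.eval v = true
    · rcases hI₂r v hv.2 with ⟨D, hD, hsat⟩ | h
      · exact Or.inr (Or.inl ⟨D, hD, fun x hx => by
          rcases Finset.mem_insert.mp hx with rfl | hx
          · exact hl
          · exact hsat x hx⟩)
      · exact Or.inr (Or.inr h)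
    · have hc := hcompl (Bool.eq_false_iff.mpr hl)
      rcases hI₁r v hv.1 with ⟨C, hC, hsat⟩ | h
      · exact Or.inl ⟨C, hC, fun x hx => by
          rcases Finset.mem_insert.mp hx with rfl | hx
          · exact hc
          · exact hsat x hx⟩
      · exact Or.inr (Or.inr h)
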